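/- If f satisfies a class-K_SAT lower bound with constants a, b > 0, then along any gradient-flow solution the decay is exponential once inside a sublevel set: for every ε > 0 and every t̄ ≥ 0 with f(φ(t̄)) − f̲ ≤ ε, one has for all t ≥ t̄ that f(φ(t)) − f̲ ≤ (f(φ(t̄)) − f̲) · exp( −(a/(b+ε)) (t − t̄) ). -/

import Mathlib

/-- Under a class-K_SAT lower bound, the gradient flow decays exponentially once it enters a
sublevel set. -/
theorem KSAT_exponential_decay_in_sublevel
    {E : Type*} [NormedAddCommGroup E] [InnerProductSpace ℝ E] [FiniteDimensional ℝ E]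
    (f : E → ℝ) (hf : Differentiable ℝ f) (hbdd : BddBelow (Set.range f))
    (a b : ℝ) (ha : 0 < a) (hb : 0 < b)
    (hKSAT : ∀ x : E, ‖gradient f x‖ ≥
      Real.sqrt (a * (f x - ⨅ y, f y) / (b + (f x - ⨅ y, f y))))
    (φ : ℝ → E) (hφ : ∀ t : ℝ, 0 ≤ t → HasDerivAt φ (-gradient f (φ t)) t)
    (ε : ℝ) (hε : 0 < ε)
    (tbar : ℝ) (htbar : 0 ≤ tbar) (hlevel : f (φ tbar) - (⨅ y, f y) ≤ ε)
    (t : ℝ) (ht : tbar ≤ t) :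
    f (φ t) - (⨅ y, f y) ≤
      (f (φ tbar) - ⨅ y, f y) * Real.exp (-(a / (b + ε)) * (t - tbar)) := by
  set m : ℝ := ⨅ y, f y with hm
  set g : ℝ → ℝ := fun s => f (φ s) - m with hg
  -- nonnegativity of g
  have hg_nonneg : ∀ s : ℝ, 0 ≤ g s := by
    intro s
    have : m ≤ f (φ s) := ciInf_le hbdd (φ s)
    simpa [hg] using sub_nonneg.mpr this
  -- derivative of g
  have hgderiv : ∀ s : ℝ, 0 ≤ s → HasDerivAt g (-‖gradient f (φ s)‖ ^ 2) s := by
    intro s hs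
    have h1 : HasGradientAt f (gradient f (φ s)) (φ s) := (hf (φ s)).hasGradientAt
    have h2 : HasDerivAt (fun u => f (φ u))
        ((fderiv ℝ f (φ s)) (-gradient f (φ s))) s :=
      (hf (φ s)).hasFDerivAt.comp_hasDerivAt s (hφ s hs)
    have h3 : (fderiv ℝ f (φ s)) (-gradient f (φ s)) = -‖gradient f (φ s)‖ ^ 2 := by
      have := h1.hasFDerivAt
      rw [this.fderiv]
      rw [map_neg, InnerProductSpace.toDual_apply_apply, real_inner_self_eq_norm_sq]
    rw [h3] at h2
    simpa [hg] using h2.sub_const m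
  -- g is antitone on [0, ∞)
  have hganti : AntitoneOn g (Set.Ici 0) := by
    apply antitoneOn_of_deriv_nonpos (convex_Ici 0)
    · exact fun s hs => ((hgderiv s hs).continuousAt).continuousWithinAt
    · intro s hs
      rw [interior_Ici] at hs
      exact (hgderiv s hs.le).differentiableAt.differentiableWithinAt
    · intro s hs
      rw [interior_Ici] at hs
      rw [(hgderiv s hs.le).deriv]
      exact neg_nonpos.mpr (pow_nonneg (norm_nonneg _) 2)
  -- key pointwise bound on [tbar, t)
  have hbound : ∀ s ∈ Set.Ico tbar t, -‖gradient f (φ s)‖ ^ 2 ≤ -(a / (b + ε)) * g s + 0 := by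
    intro s hs
    have hs0 : (0:ℝ) ≤ s := le_trans htbar hs.1
    have hgε : g s ≤ ε := le_trans (hganti (Set.mem_Ici.mpr htbar) (Set.mem_Ici.mpr hs0) hs.1)
      hlevel
    have hfrac_nonneg : 0 ≤ a * g s / (b + g s) := by
      have := hg_nonneg s
      positivity
    have hsq : a * g s / (b + g s) ≤ ‖gradient f (φ s)‖ ^ 2 := by
      have h1 := hKSAT (φ s)
      have := Real.sqrt_le_sqrt (le_of_eq (rfl : a * g s / (b + g s) = a * g s / (b + g s)))
      calc a * g s / (b + g s)
          = Real.sqrt (a * g s / (b + g s)) ^ 2 := (Real.sq_sqrt hfrac_nonneg).symm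
        _ ≤ ‖gradient f (φ s)‖ ^ 2 := by
            apply pow_le_pow_left₀ (Real.sqrt_nonneg _) _ 2
            exact h1
    have hfrac : a / (b + ε) * g s ≤ a * g s / (b + ε) := by ring_nf; rfl
    have h2 : a * g s / (b + ε) ≤ a * g s / (b + g s) := by
      apply div_le_div_of_nonneg_left _ _ _
      · have := hg_nonneg s; positivity
      · have := hg_nonneg s; linarith
      · linarith
    have : a / (b + ε) * g s ≤ ‖gradient f (φ s)‖ ^ 2 :=
      le_trans hfrac (le_trans h2 hsq)
    linarith
  -- Grönwall
  have key := le_gronwallBound_of_liminf_deriv_right_le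
    (f := g) (f' := fun s => -‖gradient f (φ s)‖ ^ 2)
    (δ := g tbar) (K := -(a / (b + ε))) (ε := 0) (a := tbar) (b := t)
    (fun s hs => ((hgderiv s (le_trans htbar hs.1)).continuousAt).continuousWithinAt)
    (fun s hs r hr =>
      ((hgderiv s (le_trans htbar hs.1)).hasDerivWithinAt.liminf_right_slope_le hr))
    le_rfl hbound t (Set.right_mem_Icc.mpr ht)
  rwa [gronwallBound_ε0] at key
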